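/- Let 𝔄 be a C*-algebra and let A, B ∈ 𝔄 be normal elements (A A* = A* A and B B* = B* B) such that A B = 0. Then B A = 0, A B* = 0, and B* A = 0. -/
import Mathlib


/-- In a C*-algebra, if `A` and `B` are normal and `A * B = 0`, then
`B * A = 0`, `A * star B = 0` and `star B * A = 0`. -/
theorem normal_mul_eq_zero_orthogonal
    {𝔄 : Type*} [NonUnitalNormedRing 𝔄] [StarRing 𝔄] [CStarRing 𝔄]
    [CompleteSpace 𝔄]
    (A B : 𝔄) (hA : A * star A = star A * A) (hB : B * star B = star B * B)
    (hAB : A * B = 0) :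
    B * A = 0 ∧ A * star B = 0 ∧ star B * A = 0 := by
  have key : ∀ x : 𝔄, star x * x = 0 → x = 0 := by
    intro x hx
    have : ‖x‖ * ‖x‖ = 0 := by rw [← CStarRing.norm_star_mul_self, hx, norm_zero]
    have h0 : ‖x‖ = 0 := by nlinarith [norm_nonneg x]
    exact norm_eq_zero.mp h0
  have key' : ∀ x : 𝔄, x * star x = 0 → x = 0 := by
    intro x hx
    have : ‖x‖ * ‖x‖ = 0 := by rw [← CStarRing.norm_self_mul_star, hx, norm_zero]
    have h0 : ‖x‖ = 0 := by nlinarith [norm_nonneg x]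
    exact norm_eq_zero.mp h0
  -- star A * B = 0
  have h1 : star A * B = 0 := by
    apply key
    calc star (star A * B) * (star A * B)
        = star B * (A * star A) * B := by simp [star_mul, mul_assoc]
      _ = (star B * star A) * (A * B) := by rw [hA]; simp [mul_assoc]
      _ = 0 := by rw [hAB, mul_zero]
  -- A * star B = 0
  have h2 : A * star B = 0 := by
    apply key'
    calc (A * star B) * star (A * star B)
        = A * (star B * B) * star A := by simp [star_mul, mul_assoc]
      _ = (A * B) * (star B * star A) := by rw [← hB]; simp [mul_assoc]
      _ = 0 := by rw [hAB, zero_mul]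
  -- star B * A = 0 from h1 by taking star
  have h3 : star B * A = 0 := by
    have := congrArg star h1
    simpa [star_mul] using this
  -- B * A = 0
  have h4 : B * A = 0 := by
    apply key'
    calc (B * A) * star (B * A)
        = B * (A * star A) * star B := by simp [star_mul, mul_assoc]
      _ = (B * star A) * (A * star B) := by rw [hA]; simp [mul_assoc]
      _ = 0 := by rw [h2, mul_zero]
  exact ⟨h4, h2, h3⟩
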